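/- Let B and K be positive integers and let θ be a real number with 0 ≤ θ < B. Consider the set A ⊆ ℝ^{B×K} of all families ζ = (ζ_{b,j})_{1≤b≤B, 1≤j≤K} with ζ_{b,j} ≥ 0 for all b, j, such that the number of indices b ∈ {1,…,B} with ζ_{b,j} > 1 for all j ∈ {1,…,K} is strictly greater than θ. Then the infimum of Σ_{b=1}^{B} Σ_{j=1}^{K} ζ_{b,j} over ζ ∈ A equals K·(⌊θ⌋ + 1). -/

import Mathlib

open Finset

/-- The dominant-outage optimization (exponential and gamma-gamma cases): over families
`ζ : Fin B × Fin K → ℝ` of nonnegative entries such that strictly more than `θ` of the `B`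
rows have all their entries `> 1`, the infimum of the sum of the entries is `K(⌊θ⌋ + 1)`. -/
theorem outage_infimum_linear (B K : ℕ) (hB : 0 < B) (hK : 0 < K)
    (θ : ℝ) (hθ0 : 0 ≤ θ) (hθB : θ < B) :
    sInf ((fun ζ : Fin B → Fin K → ℝ => ∑ b, ∑ j, ζ b j) ''
        {ζ | (∀ b j, 0 ≤ ζ b j) ∧ θ < ({b : Fin B | ∀ j, 1 < ζ b j}.ncard : ℝ)}) =
      (K : ℝ) * ((⌊θ⌋ : ℝ) + 1) := by
  have h0 : (0:ℤ) ≤ ⌊θ⌋ := Int.floor_nonneg.2 hθ0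
  set n : ℕ := ⌊θ⌋.toNat + 1 with hn
  have hfl : (⌊θ⌋ : ℝ) = (⌊θ⌋.toNat : ℝ) := by exact_mod_cast (Int.toNat_of_nonneg h0).symm
  have htarget : (K : ℝ) * ((⌊θ⌋ : ℝ) + 1) = (K : ℝ) * n := by
    rw [hfl, hn]; push_cast; ring
  have hθn : θ < (n : ℝ) := by
    rw [hn]; push_cast; rw [← hfl]; exact Int.lt_floor_add_one θ
  have hnB : n ≤ B := by
    have hBZ : ⌊θ⌋ < (B : ℤ) := by
      have h1 := Int.floor_le θ
      by_contra h
      push_neg at h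
      have : (B:ℝ) ≤ (⌊θ⌋ : ℝ) := by exact_mod_cast h
      linarith
    omega
  have hfilter : (Finset.univ.filter (fun b : Fin B => (b:ℕ) < n)).card = n := by
    have : Finset.univ.filter (fun b : Fin B => (b:ℕ) < n)
        = Finset.map (Fin.castLEEmb hnB) Finset.univ := by
      ext b
      simp only [Finset.mem_filter, Finset.mem_univ, true_and, Finset.mem_map]
      constructor
      · intro hb; exact ⟨⟨b, hb⟩, rfl⟩
      · rintro ⟨a, rfl⟩; exact a.2
    rw [this, Finset.card_map, Finset.card_univ, Fintype.card_fin]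
  rw [htarget]
  apply csInf_eq_of_forall_ge_of_forall_gt_exists_lt
  · -- nonempty
    refine ⟨(B : ℝ) * K * 2, ⟨fun _ _ => 2, ⟨fun _ _ => by norm_num, ?_⟩, by
      simp [Finset.sum_const]; ring⟩⟩
    have huniv : {b : Fin B | ∀ _ : Fin K, (1:ℝ) < 2} = Set.univ := by
      ext b; simp
    rw [huniv, Set.ncard_univ]
    simpa using hθB
  · -- lower bound
    rintro x ⟨ζ, ⟨hpos, hcard⟩, rfl⟩
    set S : Set (Fin B) := {b : Fin B | ∀ j, 1 < ζ b j} with hS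
    have hSfin : S.Finite := Set.toFinite S
    have hnS : n ≤ S.ncard := by
      have h1 : ⌊θ⌋ < (S.ncard : ℤ) := by
        apply Int.floor_lt.2
        exact_mod_cast hcard
      omega
    have hinner : ∀ b ∈ hSfin.toFinset, (K:ℝ) ≤ ∑ j, ζ b j := by
      intro b hb
      rw [Set.Finite.mem_toFinset] at hb
      calc (K:ℝ) = ∑ _j : Fin K, (1:ℝ) := by simp
        _ ≤ ∑ j, ζ b j := Finset.sum_le_sum fun j _ => (hb j).le
    calc (K : ℝ) * n ≤ (K : ℝ) * S.ncard := by
          apply mul_le_mul_of_nonneg_left _ (by positivity)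
          exact_mod_cast hnS
      _ = hSfin.toFinset.card • (K:ℝ) := by
          rw [Set.ncard_eq_toFinset_card _ hSfin, nsmul_eq_mul]; ring
      _ ≤ ∑ b ∈ hSfin.toFinset, ∑ j, ζ b j := Finset.card_nsmul_le_sum _ _ _ hinner
      _ ≤ ∑ b, ∑ j, ζ b j := by
          apply Finset.sum_le_sum_of_subset_of_nonneg (Finset.subset_univ _)
          intro b _ _
          exact Finset.sum_nonneg fun j _ => hpos b j
  · -- upper approximation
    intro w hw
    have hKn : (0:ℝ) < (K : ℝ) * n := by positivity
    set δ : ℝ := (w - (K:ℝ)*n) / (2 * ((K:ℝ)*n)) with hδ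
    have hδpos : 0 < δ := div_pos (by linarith) (by positivity)
    refine ⟨(K:ℝ)*n*(1+δ),
      ⟨fun b _ => if (b:ℕ) < n then 1 + δ else 0, ⟨fun b j => ?_, ?_⟩, ?_⟩, ?_⟩
    · dsimp only
      split
      · linarith
      · exact le_rfl
    · -- ncard condition
      have hset : {b : Fin B | ∀ _j : Fin K, 1 < if (b:ℕ) < n then 1 + δ else 0}
          = {b : Fin B | (b:ℕ) < n} := by
        ext b
        simp only [Set.mem_setOf_eq]
        constructor
        · intro h
          by_contra hb
          have := h ⟨0, hK⟩
          rw [if_neg hb] at this; linarith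
        · intro hb _j; rw [if_pos hb]; linarith
      rw [hset]
      have hcard : {b : Fin B | (b:ℕ) < n}.ncard = n := by
        rw [Set.ncard_eq_toFinset_card', Set.toFinset_setOf, hfilter]
      rw [hcard]; exact hθn
    · -- sum value
      simp only
      have hrow : ∀ b : Fin B,
          (∑ _j : Fin K, (if (b:ℕ) < n then (1:ℝ) + δ else 0))
            = if (b:ℕ) < n then (K:ℝ)*(1+δ) else 0 := by
        intro b
        split <;> simp [Finset.sum_const, mul_comm] <;> ring
      rw [Finset.sum_congr rfl fun b _ => hrow b, ← Finset.sum_filter]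
      rw [Finset.sum_const, hfilter, nsmul_eq_mul]
      ring
    · -- < w
      have : (K:ℝ)*n*(1+δ) = (K:ℝ)*n + (w - (K:ℝ)*n)/2 := by
        rw [hδ]; field_simp [left_ne_zero_of_mul hKn.ne', right_ne_zero_of_mul hKn.ne']
      rw [this]; linarith
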